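/- The covariance function r(t,s) = (1/2)(|t|^{2H} + |s|^{2H} - |t-s|^{2H}) on [0,∞)×[0,∞) is positive semidefinite for every H ∈ (0,1]: for any finite collection of times t_1,...,t_n ≥ 0 and reals c_1,...,c_n, the double sum Σ_{i,j} c_i c_j r(t_i,t_j) ≥ 0. -/
import Mathlib


open Real MeasureTheory Set

lemma fbm_integrable (β : ℝ) (hβ0 : 0 < β) (hβ2 : β < 2) (a : ℝ) :
    IntegrableOn (fun u => (1 - Real.cos (a*u)) * u ^ (-β-1)) (Ioi 0) := by
  have meas : ∀ s : Set ℝ, AEStronglyMeasurable (fun u => (1 - Real.cos (a*u)) * u ^ (-β-1))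
      (volume.restrict s) := by
    intro s
    apply Measurable.aestronglyMeasurable
    fun_prop
  have h1 : IntegrableOn (fun u => (1 - Real.cos (a*u)) * u ^ (-β-1)) (Ioc 0 1) := by
    have hb : IntegrableOn (fun u : ℝ => a^2 * u ^ (1-β)) (Ioc 0 1) := by
      apply Integrable.const_mul
      have := intervalIntegral.intervalIntegrable_rpow' (a := 0) (b := 1) (r := 1-β)
        (by linarith)
      rwa [intervalIntegrable_iff_integrableOn_Ioc_of_le (by norm_num)] at this
    apply Integrable.mono' hb (meas _)
    filter_upwards [ae_restrict_mem measurableSet_Ioc] with u hu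
    obtain ⟨hu0, hu1⟩ := hu
    have hw : (0:ℝ) ≤ u ^ (-β-1) := (Real.rpow_pos_of_pos hu0 _).le
    have hc1 : Real.cos (a*u) ≤ 1 := Real.cos_le_one _
    rw [Real.norm_eq_abs, abs_of_nonneg (mul_nonneg (by linarith) hw)]
    have hcos : 1 - Real.cos (a*u) ≤ a^2 * u^2 := by
      have := Real.one_sub_sq_div_two_le_cos (x := a*u)
      nlinarith [sq_nonneg (a*u), sq_nonneg a, sq_nonneg u]
    have hrw : a^2 * u ^ (1-β) = (a^2 * u^2) * u ^ (-β-1) := by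
      rw [mul_assoc]
      congr 1
      rw [← Real.rpow_natCast u 2, ← Real.rpow_add hu0]
      ring_nf
    rw [hrw]
    exact mul_le_mul_of_nonneg_right hcos hw
  have h2 : IntegrableOn (fun u => (1 - Real.cos (a*u)) * u ^ (-β-1)) (Ioi 1) := by
    have hb : IntegrableOn (fun u : ℝ => 2 * u ^ (-β-1)) (Ioi 1) :=
      (integrableOn_Ioi_rpow_of_lt (by linarith) one_pos).const_mul 2
    apply Integrable.mono' hb (meas _)
    filter_upwards [ae_restrict_mem measurableSet_Ioi] with u hu
    have hu0 : (0:ℝ) < u := lt_trans one_pos hu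
    have hw : (0:ℝ) ≤ u ^ (-β-1) := (Real.rpow_pos_of_pos hu0 _).le
    have hc1 : Real.cos (a*u) ≤ 1 := Real.cos_le_one _
    have hc2 : -1 ≤ Real.cos (a*u) := Real.neg_one_le_cos _
    rw [Real.norm_eq_abs, abs_of_nonneg (mul_nonneg (by linarith) hw)]
    exact mul_le_mul_of_nonneg_right (by linarith) hw
  have := h1.union h2
  rwa [Ioc_union_Ioi_eq_Ioi (by norm_num : (0:ℝ) ≤ 1)] at this

lemma fbm_scaling (β : ℝ) (hβ0 : 0 < β) {a : ℝ} (ha : 0 ≤ a) :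
    ∫ u in Ioi (0:ℝ), (1 - Real.cos (a*u)) * u ^ (-β-1)
      = a ^ β * ∫ u in Ioi (0:ℝ), (1 - Real.cos u) * u ^ (-β-1) := by
  rcases ha.eq_or_lt with h|h
  · simp [← h, Real.zero_rpow hβ0.ne']
  · have key := integral_comp_mul_left_Ioi (fun x => (1 - Real.cos x) * x ^ (-β-1)) 0 h
    rw [mul_zero] at key
    have hcong : ∫ u in Ioi (0:ℝ), (1 - Real.cos (a*u)) * u ^ (-β-1)
        = ∫ u in Ioi (0:ℝ), a ^ (β+1) * ((1 - Real.cos (a*u)) * (a*u) ^ (-β-1)) := by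
      apply setIntegral_congr_fun measurableSet_Ioi
      intro u hu
      have hu0 : (0:ℝ) < u := hu
      simp only []
      rw [Real.mul_rpow h.le hu0.le]
      rw [show a ^ (β+1) * ((1 - Real.cos (a*u)) * (a ^ (-β-1) * u ^ (-β-1)))
        = (a ^ (β+1) * a ^ (-β-1)) * ((1 - Real.cos (a*u)) * u ^ (-β-1)) by ring]
      rw [← Real.rpow_add h]
      norm_num
    rw [hcong, integral_const_mul, key, smul_eq_mul, ← mul_assoc, ← Real.rpow_neg_one a,
      ← Real.rpow_add h]
    norm_num

lemma fbm_cst_pos (β : ℝ) (hβ0 : 0 < β) (hβ2 : β < 2) :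
    0 < ∫ u in Ioi (0:ℝ), (1 - Real.cos u) * u ^ (-β-1) := by
  have hint : IntegrableOn (fun u => (1 - Real.cos u) * u ^ (-β-1)) (Ioi 0) := by
    have := fbm_integrable β hβ0 hβ2 1
    simpa using this
  have hnn : ∀ u ∈ Ioi (0:ℝ), 0 ≤ (1 - Real.cos u) * u ^ (-β-1) := fun u hu =>
    mul_nonneg (by linarith [Real.cos_le_one u]) (Real.rpow_pos_of_pos hu _).le
  have h13 : (0:ℝ) < ∫ u in Ioc (1:ℝ) 3, (1 - Real.cos u) * u ^ (-β-1) := by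
    rw [← intervalIntegral.integral_of_le (by norm_num : (1:ℝ) ≤ 3)]
    apply intervalIntegral.intervalIntegral_pos_of_pos_on
    · apply ContinuousOn.intervalIntegrable
      apply ContinuousOn.mul
      · exact continuousOn_const.sub Real.continuous_cos.continuousOn
      · apply ContinuousOn.rpow_const continuousOn_id
        intro x hx
        left
        rw [Set.uIcc_of_le (by norm_num : (1:ℝ) ≤ 3)] at hx
        exact ne_of_gt (lt_of_lt_of_le one_pos hx.1)
    · intro x hx
      apply mul_pos _ (Real.rpow_pos_of_pos (lt_trans one_pos hx.1) _)
      have hne : Real.cos x ≠ 1 := by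
        intro h
        rw [Real.cos_eq_one_iff_of_lt_of_lt (by nlinarith [Real.pi_gt_three, hx.1, hx.2])
          (by nlinarith [Real.pi_gt_three, hx.1, hx.2])] at h
        exact absurd h (ne_of_gt (lt_trans one_pos hx.1))
      have := Real.cos_le_one x
      cases lt_or_eq_of_le this with
      | inl h => linarith
      | inr h => exact absurd h hne
    · norm_num
  calc (0:ℝ) < ∫ u in Ioc (1:ℝ) 3, (1 - Real.cos u) * u ^ (-β-1) := h13
    _ ≤ ∫ u in Ioi (0:ℝ), (1 - Real.cos u) * u ^ (-β-1) := by
        apply setIntegral_mono_set hint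
        · filter_upwards [ae_restrict_mem measurableSet_Ioi] with u hu using hnn u hu
        · apply HasSubset.Subset.eventuallyLE
          intro x hx
          exact lt_trans one_pos hx.1

/-- The fBM covariance function `r(t,s) = (1/2)(t^(2H) + s^(2H) - |t-s|^(2H))` is
positive semidefinite on `[0,∞)` for every `H ∈ (0,1]`. -/
theorem fbm_cov_posSemidef (H : ℝ) (hH : H ∈ Set.Ioc (0 : ℝ) 1) :
    ∀ (n : ℕ) (t : Fin n → ℝ) (c : Fin n → ℝ), (∀ i, 0 ≤ t i) →
      0 ≤ ∑ i, ∑ j, c i * c j *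
        ((1 / 2) * ((t i) ^ (2 * H) + (t j) ^ (2 * H) - |t i - t j| ^ (2 * H))) := by
  obtain ⟨hH0, hH1⟩ := hH
  intro n t c ht
  rcases eq_or_lt_of_le hH1 with hHeq | hHlt
  · -- H = 1 : r(t,s) = t*s
    subst hHeq
    have hterm : ∀ i j, c i * c j *
        ((1 / 2) * ((t i) ^ ((2:ℝ) * 1) + (t j) ^ ((2:ℝ) * 1) - |t i - t j| ^ ((2:ℝ) * 1)))
        = (c i * t i) * (c j * t j) := by
      intro i j
      have e : ∀ x : ℝ, x ^ ((2:ℝ)*1) = x^(2:ℕ) := by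
        intro x
        rw [mul_one, show ((2:ℝ)) = ((2:ℕ):ℝ) by norm_num, Real.rpow_natCast]
      rw [e, e, e, sq_abs]
      ring
    calc (0:ℝ) ≤ (∑ i, c i * t i) * (∑ j, c j * t j) := mul_self_nonneg _
      _ = ∑ i, ∑ j, (c i * t i) * (c j * t j) := Finset.sum_mul_sum _ _ _ _
      _ = ∑ i, ∑ j, c i * c j *
          ((1 / 2) * ((t i) ^ (2 * (1:ℝ)) + (t j) ^ (2 * (1:ℝ)) - |t i - t j| ^ (2 * (1:ℝ)))) := by
          refine Finset.sum_congr rfl fun i _ => Finset.sum_congr rfl fun j _ => ?_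
          rw [hterm i j]
  · -- 0 < H < 1
    set β := 2 * H with hβdef
    have hβ0 : 0 < β := by positivity
    have hβ2 : β < 2 := by simp only [hβdef]; linarith
    set cst := ∫ u in Ioi (0:ℝ), (1 - Real.cos u) * u ^ (-β-1) with hcst
    have hcpos : 0 < cst := fbm_cst_pos β hβ0 hβ2
    have hJabs : ∀ d : ℝ, ∫ u in Ioi (0:ℝ), (1 - Real.cos (d*u)) * u ^ (-β-1)
        = |d| ^ β * cst := by
      intro d
      have heq : (fun u : ℝ => (1 - Real.cos (d*u)) * u ^ (-β-1))
          = fun u => (1 - Real.cos (|d| * u)) * u ^ (-β-1) := by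
        funext u
        rcases abs_cases d with ⟨h1, _⟩ | ⟨h1, _⟩
        · rw [h1]
        · rw [h1, neg_mul, Real.cos_neg]
      rw [heq]
      exact fbm_scaling β hβ0 (abs_nonneg d)
    -- pointwise expansion of the square
    have key : ∀ u : ℝ,
        ((∑ i, c i * (1 - Real.cos (t i * u)))^2 + (∑ i, c i * Real.sin (t i * u))^2)
          * u ^ (-β-1)
        = ∑ i, ∑ j, (c i * c j) *
            (((1 - Real.cos (t i * u)) * u ^ (-β-1) + (1 - Real.cos (t j * u)) * u ^ (-β-1))
              - (1 - Real.cos ((t i - t j) * u)) * u ^ (-β-1)) := by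
      intro u
      rw [pow_two, pow_two, Finset.sum_mul_sum, Finset.sum_mul_sum,
        ← Finset.sum_add_distrib, Finset.sum_mul]
      refine Finset.sum_congr rfl fun i _ => ?_
      rw [← Finset.sum_add_distrib, Finset.sum_mul]
      refine Finset.sum_congr rfl fun j _ => ?_
      rw [show (t i - t j) * u = t i * u - t j * u by ring, Real.cos_sub]
      ring
    -- integrability of each term
    have hFi : ∀ i j : Fin n, IntegrableOn (fun u : ℝ => (c i * c j) *
        (((1 - Real.cos (t i * u)) * u ^ (-β-1) + (1 - Real.cos (t j * u)) * u ^ (-β-1))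
          - (1 - Real.cos ((t i - t j) * u)) * u ^ (-β-1))) (Ioi 0) := by
      intro i j
      exact (((fbm_integrable β hβ0 hβ2 (t i)).add (fbm_integrable β hβ0 hβ2 (t j))).sub
        (fbm_integrable β hβ0 hβ2 (t i - t j))).const_mul _
    -- the integral of the nonnegative function equals the double sum of integrals
    have hIntNonneg : (0:ℝ) ≤ ∫ u in Ioi (0:ℝ),
        ((∑ i, c i * (1 - Real.cos (t i * u)))^2 + (∑ i, c i * Real.sin (t i * u))^2)
          * u ^ (-β-1) := by
      apply setIntegral_nonneg measurableSet_Ioi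
      intro u hu
      apply mul_nonneg (by positivity) (Real.rpow_pos_of_pos hu _).le
    have hswap : ∫ u in Ioi (0:ℝ),
        ((∑ i, c i * (1 - Real.cos (t i * u)))^2 + (∑ i, c i * Real.sin (t i * u))^2)
          * u ^ (-β-1)
        = ∑ i, ∑ j, ∫ u in Ioi (0:ℝ), (c i * c j) *
            (((1 - Real.cos (t i * u)) * u ^ (-β-1) + (1 - Real.cos (t j * u)) * u ^ (-β-1))
              - (1 - Real.cos ((t i - t j) * u)) * u ^ (-β-1)) := by
      rw [show (fun u : ℝ =>
          ((∑ i, c i * (1 - Real.cos (t i * u)))^2 + (∑ i, c i * Real.sin (t i * u))^2)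
            * u ^ (-β-1))
        = fun u : ℝ => ∑ i, ∑ j, (c i * c j) *
            (((1 - Real.cos (t i * u)) * u ^ (-β-1) + (1 - Real.cos (t j * u)) * u ^ (-β-1))
              - (1 - Real.cos ((t i - t j) * u)) * u ^ (-β-1)) from funext key]
      rw [integral_finset_sum _ (fun i _ => integrable_finset_sum _ (fun j _ => hFi i j))]
      exact Finset.sum_congr rfl fun i _ =>
        integral_finset_sum _ (fun j _ => hFi i j)
    have hterm : ∀ i j : Fin n, (∫ u in Ioi (0:ℝ), (c i * c j) *
            (((1 - Real.cos (t i * u)) * u ^ (-β-1) + (1 - Real.cos (t j * u)) * u ^ (-β-1))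
              - (1 - Real.cos ((t i - t j) * u)) * u ^ (-β-1)))
        = (2 * cst) * (c i * c j *
            ((1 / 2) * ((t i) ^ β + (t j) ^ β - |t i - t j| ^ β))) := by
      intro i j
      have hA := fbm_integrable β hβ0 hβ2 (t i)
      have hB := fbm_integrable β hβ0 hβ2 (t j)
      have hC := fbm_integrable β hβ0 hβ2 (t i - t j)
      have hAB : IntegrableOn (fun u : ℝ => (1 - Real.cos (t i * u)) * u ^ (-β-1)
          + (1 - Real.cos (t j * u)) * u ^ (-β-1)) (Ioi 0) := hA.add hB
      rw [integral_const_mul, integral_sub hAB hC, integral_add hA hB]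
      have e1 : (∫ u in Ioi (0:ℝ), (1 - Real.cos (t i * u)) * u ^ (-β-1)) = (t i) ^ β * cst := by
        have := hJabs (t i)
        rwa [abs_of_nonneg (ht i)] at this
      have e2 : (∫ u in Ioi (0:ℝ), (1 - Real.cos (t j * u)) * u ^ (-β-1)) = (t j) ^ β * cst := by
        have := hJabs (t j)
        rwa [abs_of_nonneg (ht j)] at this
      have e3 : (∫ u in Ioi (0:ℝ), (1 - Real.cos ((t i - t j) * u)) * u ^ (-β-1))
          = |t i - t j| ^ β * cst := hJabs (t i - t j)
      rw [e1, e2, e3]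
      ring
    have htotal : (0:ℝ) ≤ (2 * cst) * ∑ i, ∑ j, c i * c j *
        ((1 / 2) * ((t i) ^ β + (t j) ^ β - |t i - t j| ^ β)) := by
      have := hIntNonneg
      rw [hswap] at this
      calc (0:ℝ) ≤ ∑ i, ∑ j, ∫ u in Ioi (0:ℝ), (c i * c j) *
            (((1 - Real.cos (t i * u)) * u ^ (-β-1) + (1 - Real.cos (t j * u)) * u ^ (-β-1))
              - (1 - Real.cos ((t i - t j) * u)) * u ^ (-β-1)) := this
        _ = ∑ i, ∑ j, (2 * cst) * (c i * c j *
            ((1 / 2) * ((t i) ^ β + (t j) ^ β - |t i - t j| ^ β))) :=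
            Finset.sum_congr rfl fun i _ => Finset.sum_congr rfl fun j _ => hterm i j
        _ = (2 * cst) * ∑ i, ∑ j, c i * c j *
            ((1 / 2) * ((t i) ^ β + (t j) ^ β - |t i - t j| ^ β)) := by
            rw [Finset.mul_sum]
            exact Finset.sum_congr rfl fun i _ => (Finset.mul_sum _ _ _).symm
    have h2c : (0:ℝ) < 2 * cst := by linarith
    have := (mul_nonneg_iff_of_pos_left h2c).mp htotal
    simpa only [hβdef] using this
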